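/- arXiv:1810.08541 — 2 statements merged into one kernel-verified Lean document; each statement's English description precedes it below -/
import Mathlib

section
/- Fix R ≥ 0. For every ρ ∈ (0,1), one has log((ρ-1)/((R+1)·log ρ)) - ρ·(log ρ)/(ρ-1) + 1 < 0. -/
open Real Filter Set

-- aux function f t = 2 log t + 1/t - t, strictly anti on Ioc 0 1
lemma aux1 (t : ℝ) (ht0 : 0 < t) (ht1 : t < 1) : 0 < 2 * Real.log t + 1/t - t := by
  have hanti : StrictAntiOn (fun t : ℝ => 2 * Real.log t + 1/t - t) (Set.Ioc 0 1) := by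
    have hd : ∀ x : ℝ, 0 < x → HasDerivAt (fun t : ℝ => 2 * Real.log t + 1/t - t)
        (2 * x⁻¹ + (-(x^2)⁻¹) - 1) x := by
      intro x hx
      have h1 : HasDerivAt (fun t : ℝ => 2 * Real.log t) (2 * x⁻¹) x :=
        (Real.hasDerivAt_log hx.ne').const_mul 2
      have h2 : HasDerivAt (fun t : ℝ => 1/t) (-(x^2)⁻¹) x := by
        simpa [one_div] using hasDerivAt_inv hx.ne'
      exact ((h1.add h2).sub (hasDerivAt_id x))
    apply strictAntiOn_of_deriv_neg (convex_Ioc 0 1)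
    · intro x hx
      exact (hd x hx.1).continuousAt.continuousWithinAt
    · intro x hx
      rw [interior_Ioc] at hx
      rw [(hd x hx.1).deriv]
      have hx0 := hx.1
      have hx1 := hx.2
      have : 2 * x⁻¹ + (-(x^2)⁻¹) - 1 = -((x-1)^2) / x^2 := by
        field_simp
        ring
      rw [this]
      apply div_neg_of_neg_of_pos
      · have h : (x - 1) ≠ 0 := sub_ne_zero.mpr (ne_of_lt hx1)
        have := pow_two_pos_of_ne_zero h
        linarith
      · positivity
  have := hanti (Set.mem_Ioc.mpr ⟨ht0, ht1.le⟩) (Set.mem_Ioc.mpr ⟨one_pos, le_refl 1⟩) ht1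
  simpa using this

lemma aux2 (x : ℝ) (hx0 : 0 < x) (hx1 : x < 1) :
    x * (Real.log x)^2 < (1-x)^2 := by
  set t := Real.sqrt x with ht
  have ht0 : 0 < t := Real.sqrt_pos.mpr hx0
  have ht1 : t < 1 := by
    rw [ht, show (1:ℝ) = Real.sqrt 1 by simp]
    exact Real.sqrt_lt_sqrt hx0.le hx1
  have htx : t^2 = x := Real.sq_sqrt hx0.le
  have hlogx : Real.log x = 2 * Real.log t := by
    rw [ht, Real.log_sqrt hx0.le]; ring
  have hkey := aux1 t ht0 ht1
  have hlogneg : Real.log x < 0 := Real.log_neg hx0 hx1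
  -- from hkey: -(2 log t) < 1/t - t, i.e. -log x < 1/t - t; multiply by t: t*(-log x) < 1 - x
  have hmul : t * (-Real.log x) < 1 - x := by
    have h1 : -Real.log x < 1/t - t := by rw [hlogx]; linarith
    have := mul_lt_mul_of_pos_left h1 ht0
    calc t * (-Real.log x) < t * (1/t - t) := this
      _ = 1 - x := by field_simp; linarith [htx]
  have hpos : 0 < t * (-Real.log x) := mul_pos ht0 (by linarith)
  nlinarith [mul_lt_mul_of_pos_left hmul hpos, hmul, htx]

/-- For `R ≥ 0` and `ρ ∈ (0,1)`,
`log((ρ-1)/((R+1)·log ρ)) - ρ·log ρ/(ρ-1) + 1 < 0`. -/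
theorem stmt_8 (R : ℝ) (hR : 0 ≤ R) :
    ∀ ρ : ℝ, 0 < ρ → ρ < 1 →
      Real.log ((ρ - 1) / ((R + 1) * Real.log ρ)) - ρ * Real.log ρ / (ρ - 1) + 1 < 0 := by
  have hR1 : (0:ℝ) < R + 1 := by linarith
  set F : ℝ → ℝ := fun ρ =>
    Real.log ((ρ - 1) / ((R + 1) * Real.log ρ)) - ρ * Real.log ρ / (ρ - 1) + 1 with hFdef
  set G : ℝ → ℝ := fun ρ =>
    Real.log (1 - ρ) - Real.log (R + 1) - Real.log (-(Real.log ρ))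
      - ρ * Real.log ρ / (ρ - 1) + 1 with hGdef
  -- basic facts on (0,1)
  have hfacts : ∀ ρ ∈ Set.Ioo (0:ℝ) 1, Real.log ρ < 0 ∧ ρ - 1 < 0 := by
    intro ρ hρ
    exact ⟨Real.log_neg hρ.1 hρ.2, by linarith [hρ.2]⟩
  -- F = G on (0,1)
  have hFG : ∀ ρ ∈ Set.Ioo (0:ℝ) 1, F ρ = G ρ := by
    intro ρ hρ
    obtain ⟨hL, hρ1⟩ := hfacts ρ hρ
    have h1 : (ρ - 1) / ((R + 1) * Real.log ρ) = (1 - ρ) / ((R + 1) * (-(Real.log ρ))) := by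
      rw [show (1 - ρ) = -(ρ - 1) by ring, show (R + 1) * (-(Real.log ρ)) = -((R+1) * Real.log ρ) by ring,
        neg_div_neg_eq]
    have h2 : Real.log ((1 - ρ) / ((R + 1) * (-(Real.log ρ))))
        = Real.log (1 - ρ) - Real.log (R + 1) - Real.log (-(Real.log ρ)) := by
      rw [Real.log_div (by linarith) (mul_pos hR1 (by linarith : (0:ℝ) < -(Real.log ρ))).ne', Real.log_mul hR1.ne' (by linarith)]
      ring
    simp only [hFdef, hGdef, h1, h2]
  -- G strictly monotone on (0,1)
  have hd : ∀ ρ ∈ Set.Ioo (0:ℝ) 1, HasDerivAt G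
      ((ρ * (Real.log ρ)^2 - (ρ - 1)^2) / (ρ * Real.log ρ * (ρ - 1)^2)) ρ := by
    intro ρ hρ
    obtain ⟨hL, hρ1⟩ := hfacts ρ hρ
    have hρ0 := hρ.1
    have h1 : HasDerivAt (fun ρ : ℝ => Real.log (1 - ρ)) ((1 - ρ)⁻¹ * (-1)) ρ := by
      exact (Real.hasDerivAt_log (by linarith)).comp ρ
        (((hasDerivAt_id ρ).const_sub 1))
    have h2 : HasDerivAt (fun ρ : ℝ => Real.log (-(Real.log ρ)))
        ((-(Real.log ρ))⁻¹ * (-ρ⁻¹)) ρ := by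
      exact (Real.hasDerivAt_log (by linarith)).comp ρ ((Real.hasDerivAt_log hρ0.ne').neg)
    have h3 : HasDerivAt (fun ρ : ℝ => ρ * Real.log ρ / (ρ - 1))
        (((1 * Real.log ρ + ρ * ρ⁻¹) * (ρ - 1) - ρ * Real.log ρ * 1) / (ρ - 1)^2) ρ := by
      exact ((hasDerivAt_id ρ).mul (Real.hasDerivAt_log hρ0.ne')).div
        ((hasDerivAt_id ρ).sub_const 1) (by linarith)
    have h4 : HasDerivAt G
        ((1 - ρ)⁻¹ * (-1) - (-(Real.log ρ))⁻¹ * (-ρ⁻¹)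
          - ((1 * Real.log ρ + ρ * ρ⁻¹) * (ρ - 1) - ρ * Real.log ρ * 1) / (ρ - 1)^2) ρ := by
      exact (((h1.sub_const (Real.log (R+1))).sub h2).sub h3).add_const 1
    convert h4 using 1
    have hLne : Real.log ρ ≠ 0 := ne_of_lt hL
    have hρ1ne : ρ - 1 ≠ 0 := ne_of_lt hρ1
    have h1ρne : (1:ℝ) - ρ ≠ 0 := by intro h; apply hρ1ne; linarith
    field_simp
    ring
  have hmono : StrictMonoOn G (Set.Ioo (0:ℝ) 1) := by
    apply strictMonoOn_of_deriv_pos (convex_Ioo 0 1)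
    · intro x hx
      exact (hd x hx).continuousAt.continuousWithinAt
    · intro x hx
      rw [interior_Ioo] at hx
      rw [(hd x hx).deriv]
      obtain ⟨hL, hx1⟩ := hfacts x hx
      have hnum : x * (Real.log x)^2 - (x - 1)^2 < 0 := by
        have := aux2 x hx.1 hx.2
        nlinarith [this]
      have hden : x * Real.log x * (x - 1)^2 < 0 := by
        have h1 : x * Real.log x < 0 := mul_neg_of_pos_of_neg hx.1 hL
        have h2 : (0:ℝ) < (x - 1)^2 := pow_two_pos_of_ne_zero (ne_of_lt hx1)
        exact mul_neg_of_neg_of_pos h1 h2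
      exact div_pos_of_neg_of_neg hnum hden
  -- tendsto of F to -log(R+1) as ρ → 1⁻
  have hslope : Filter.Tendsto (fun ρ : ℝ => Real.log ρ / (ρ - 1)) (nhdsWithin 1 (Set.Iio 1))
      (nhds 1) := by
    have h := Real.hasDerivAt_log (one_ne_zero)
    rw [hasDerivAt_iff_tendsto_slope] at h
    have h' : Filter.Tendsto (slope Real.log 1) (nhdsWithin 1 (Set.Iio 1)) (nhds 1⁻¹) :=
      h.mono_left (nhdsWithin_mono 1 (fun x hx => ne_of_lt hx))
    have heq : ∀ ρ : ℝ, slope Real.log 1 ρ = Real.log ρ / (ρ - 1) := by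
      intro ρ
      simp [slope_def_field]
    rw [show (1:ℝ)⁻¹ = 1 from inv_one] at h'
    exact h'.congr heq
  have hinv : Filter.Tendsto (fun ρ : ℝ => (ρ - 1) / Real.log ρ) (nhdsWithin 1 (Set.Iio 1))
      (nhds 1) := by
    have := hslope.inv₀ one_ne_zero
    simpa [inv_div] using this
  have hid : Filter.Tendsto (fun ρ : ℝ => ρ) (nhdsWithin 1 (Set.Iio 1)) (nhds 1) :=
    tendsto_id'.mpr nhdsWithin_le_nhds
  have hlogpart : Filter.Tendsto (fun ρ : ℝ => Real.log (((ρ - 1) / Real.log ρ) * (R + 1)⁻¹))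
      (nhdsWithin 1 (Set.Iio 1)) (nhds (-Real.log (R + 1))) := by
    have h1 : Filter.Tendsto (fun ρ : ℝ => ((ρ - 1) / Real.log ρ) * (R + 1)⁻¹)
        (nhdsWithin 1 (Set.Iio 1)) (nhds ((R + 1)⁻¹)) := by
      simpa using hinv.mul_const (R + 1)⁻¹
    have h2 : ContinuousAt Real.log ((R + 1)⁻¹) :=
      Real.continuousAt_log (by positivity)
    have := h2.tendsto.comp h1
    simpa [Real.log_inv, Function.comp_def] using this
  have hmul : Filter.Tendsto (fun ρ : ℝ => ρ * (Real.log ρ / (ρ - 1)))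
      (nhdsWithin 1 (Set.Iio 1)) (nhds 1) := by
    simpa using hid.mul hslope
  have hF : Filter.Tendsto F (nhdsWithin 1 (Set.Iio 1)) (nhds (-Real.log (R + 1))) := by
    have heq : ∀ ρ : ℝ, F ρ = Real.log (((ρ - 1) / Real.log ρ) * (R + 1)⁻¹)
        - ρ * (Real.log ρ / (ρ - 1)) + 1 := by
      intro ρ
      simp only [hFdef]
      rw [show (ρ - 1) / ((R + 1) * Real.log ρ) = ((ρ - 1) / Real.log ρ) * (R + 1)⁻¹ by
        rw [div_eq_mul_inv, mul_inv, div_eq_mul_inv]; ring]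
      rw [mul_div_assoc]
    have h := (hlogpart.sub hmul).add_const 1
    have : -Real.log (R + 1) - 1 + 1 = -Real.log (R + 1) := by ring
    rw [this] at h
    exact h.congr (fun ρ => (heq ρ).symm)
  -- conclusion
  intro ρ hρ0 hρ1
  have hρ : ρ ∈ Set.Ioo (0:ℝ) 1 := ⟨hρ0, hρ1⟩
  set ρ' : ℝ := (ρ + 1) / 2 with hρ'def
  have hρ'mem : ρ' ∈ Set.Ioo (0:ℝ) 1 := ⟨by linarith, by linarith⟩
  have hlt : ρ < ρ' := by rw [hρ'def]; linarith
  have hle : G ρ' ≤ -Real.log (R + 1) := by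
    apply ge_of_tendsto hF
    have hIoo : Set.Ioo ρ' 1 ∈ nhdsWithin (1:ℝ) (Set.Iio 1) :=
      Ioo_mem_nhdsLT_of_mem (by constructor <;> [linarith [hρ'mem.2]; rfl] : (1:ℝ) ∈ Set.Ioc ρ' 1)
    filter_upwards [hIoo] with σ hσ
    have hσmem : σ ∈ Set.Ioo (0:ℝ) 1 := ⟨by linarith [hσ.1, hρ'mem.1], hσ.2⟩
    rw [hFG σ hσmem]
    exact (hmono hρ'mem hσmem hσ.1).le
  have hlog0 : (0:ℝ) ≤ Real.log (R + 1) := Real.log_nonneg (by linarith)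
  have : F ρ = G ρ := hFG ρ hρ
  show F ρ < 0
  rw [this]
  calc G ρ < G ρ' := hmono hρ hρ'mem hlt
    _ ≤ -Real.log (R + 1) := hle
    _ ≤ 0 := by linarith
end

section
/- Fix R ≥ 0. The function w(ρ) = (1/log ρ)·log((ρ-1)/((R+1)·log ρ)) is (strictly) increasing in ρ on (0,1). -/
open Real Set

private lemma hasDerivAt_expNeg (x : ℝ) :
    HasDerivAt (fun y : ℝ => Real.exp (-y)) (-Real.exp (-x)) x := by
  exact ((Real.hasDerivAt_exp (-x)).comp x ((hasDerivAt_id x).neg)).congr_deriv (by ring)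

private lemma hasDerivAt_G2 (y : ℝ) :
    HasDerivAt (fun y : ℝ => 2 - Real.exp y - Real.exp (-y) + y * (Real.exp y - Real.exp (-y)))
      (y * (Real.exp y + Real.exp (-y))) y := by
  have h := (((hasDerivAt_const y (2:ℝ)).sub (Real.hasDerivAt_exp y)).sub
      (hasDerivAt_expNeg y)).add
      ((hasDerivAt_id' y).mul ((Real.hasDerivAt_exp y).sub (hasDerivAt_expNeg y)))
  refine h.congr_deriv ?_
  simp only [Pi.sub_apply, Pi.add_apply]
  ring

private lemma G2_pos {x : ℝ} (hx : 0 < x) :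
    0 < 2 - Real.exp x - Real.exp (-x) + x * (Real.exp x - Real.exp (-x)) := by
  have key : StrictMonoOn
      (fun y : ℝ => 2 - Real.exp y - Real.exp (-y) + y * (Real.exp y - Real.exp (-y)))
      (Ici 0) := by
    apply strictMonoOn_of_deriv_pos (convex_Ici 0)
    · exact fun y _ => ((hasDerivAt_G2 y).differentiableAt.continuousAt).continuousWithinAt
    · intro y hy
      rw [interior_Ici] at hy
      rw [(hasDerivAt_G2 y).deriv]
      have h1 : 0 < Real.exp y + Real.exp (-y) := by positivity
      exact mul_pos hy h1
  have h := key (self_mem_Ici) (show x ∈ Ici (0:ℝ) from hx.le) hx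
  norm_num at h; linarith

private lemma hasDerivAt_G1 (y : ℝ) :
    HasDerivAt (fun y : ℝ => 2 * y + y * (Real.exp y + Real.exp (-y)) - 2 * Real.exp y
        + 2 * Real.exp (-y))
      (2 - Real.exp y - Real.exp (-y) + y * (Real.exp y - Real.exp (-y))) y := by
  have h := ((((hasDerivAt_id' y).const_mul 2).add
      ((hasDerivAt_id' y).mul ((Real.hasDerivAt_exp y).add (hasDerivAt_expNeg y)))).sub
      ((Real.hasDerivAt_exp y).const_mul 2)).add ((hasDerivAt_expNeg y).const_mul 2)
  refine h.congr_deriv ?_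
  simp only [Pi.sub_apply, Pi.add_apply]
  ring

private lemma G1_pos {x : ℝ} (hx : 0 < x) :
    0 < 2 * x + x * (Real.exp x + Real.exp (-x)) - 2 * Real.exp x + 2 * Real.exp (-x) := by
  have key : StrictMonoOn
      (fun y : ℝ => 2 * y + y * (Real.exp y + Real.exp (-y)) - 2 * Real.exp y + 2 * Real.exp (-y))
      (Ici 0) := by
    apply strictMonoOn_of_deriv_pos (convex_Ici 0)
    · exact fun y _ => ((hasDerivAt_G1 y).differentiableAt.continuousAt).continuousWithinAt
    · intro y hy
      rw [interior_Ici] at hy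
      rw [(hasDerivAt_G1 y).deriv]
      exact G2_pos hy
  have h := key (self_mem_Ici) (show x ∈ Ici (0:ℝ) from hx.le) hx
  norm_num at h; linarith

private lemma hasDerivAt_G0 (y : ℝ) :
    HasDerivAt (fun y : ℝ => y ^ 2 + y * Real.exp y - y * Real.exp (-y) - 3 * Real.exp y
        - 3 * Real.exp (-y) + 6)
      (2 * y + y * (Real.exp y + Real.exp (-y)) - 2 * Real.exp y + 2 * Real.exp (-y)) y := by
  have h := (((((hasDerivAt_pow 2 y).add
      ((hasDerivAt_id' y).mul (Real.hasDerivAt_exp y))).sub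
      ((hasDerivAt_id' y).mul (hasDerivAt_expNeg y))).sub
      ((Real.hasDerivAt_exp y).const_mul 3)).sub
      ((hasDerivAt_expNeg y).const_mul 3)).add_const 6
  refine h.congr_deriv ?_
  ring

private lemma G0_pos {x : ℝ} (hx : 0 < x) :
    0 < x ^ 2 + x * Real.exp x - x * Real.exp (-x) - 3 * Real.exp x - 3 * Real.exp (-x) + 6 := by
  have key : StrictMonoOn
      (fun y : ℝ => y ^ 2 + y * Real.exp y - y * Real.exp (-y) - 3 * Real.exp y
        - 3 * Real.exp (-y) + 6)
      (Ici 0) := by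
    apply strictMonoOn_of_deriv_pos (convex_Ici 0)
    · exact fun y _ => ((hasDerivAt_G0 y).differentiableAt.continuousAt).continuousWithinAt
    · intro y hy
      rw [interior_Ici] at hy
      rw [(hasDerivAt_G0 y).deriv]
      exact G1_pos hy
  have h := key (self_mem_Ici) (show x ∈ Ici (0:ℝ) from hx.le) hx
  norm_num at h; linarith

private lemma hasDerivAt_psi {y : ℝ} (hy : 0 < y) :
    HasDerivAt (fun t : ℝ => Real.log t - 2 * (t - 1) / (t + 1))
      (1 / y - 4 / (y + 1) ^ 2) y := by
  have h := (Real.hasDerivAt_log hy.ne').sub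
    ((((hasDerivAt_id' y).sub_const 1).const_mul 2).div ((hasDerivAt_id' y).add_const 1)
      (by positivity))
  refine h.congr_deriv ?_
  ring_nf

private lemma two_mul_div_le_log {t : ℝ} (ht : 1 ≤ t) :
    2 * (t - 1) / (t + 1) ≤ Real.log t := by
  have key : MonotoneOn (fun t : ℝ => Real.log t - 2 * (t - 1) / (t + 1)) (Ici 1) := by
    apply monotoneOn_of_deriv_nonneg (convex_Ici 1)
    · intro y hy
      have hy0 : (0:ℝ) < y := lt_of_lt_of_le one_pos hy
      exact ((hasDerivAt_psi hy0).differentiableAt.continuousAt).continuousWithinAt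
    · intro y hy
      rw [interior_Ici] at hy
      exact ((hasDerivAt_psi (lt_trans one_pos hy)).differentiableAt).differentiableWithinAt
    · intro y hy
      rw [interior_Ici] at hy
      have hy0 : (0:ℝ) < y := lt_trans one_pos hy
      rw [(hasDerivAt_psi hy0).deriv]
      rw [sub_nonneg, div_le_div_iff₀ (by positivity) hy0]
      nlinarith [sq_nonneg (y - 1)]
  have h := key (self_mem_Ici) (show t ∈ Ici (1:ℝ) from ht) ht
  norm_num at h
  linarith

private lemma key_x {x : ℝ} (hx : 0 < x) :
    Real.log ((1 - Real.exp (-x)) / x) < Real.exp (-x) * x / (1 - Real.exp (-x)) - 1 := by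
  have hG := G0_pos hx
  have hE1' : Real.exp (-x) < 1 := by
    rw [← Real.exp_zero]
    exact Real.exp_lt_exp.mpr (by linarith)
  set E := Real.exp (-x) with hE
  have hEpos : 0 < E := Real.exp_pos _
  have hE1 : E < 1 := hE1'
  set s := 1 - E with hsdef
  have hs : 0 < s := by simp only [hsdef]; linarith
  have hsx : s < x := by
    have h1 : -x + 1 < Real.exp (-x) := Real.add_one_lt_exp (by linarith)
    simp only [hsdef]
    linarith [h1]
  have hEe : E * Real.exp x = 1 := by
    rw [hE, ← Real.exp_add]; simp
  have h9 : x * (E * Real.exp x) = x := by rw [hEe]; ring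
  -- C > 0
  have hC : 0 < x ^ 2 + 2 * x * s - 3 * s ^ 2 - x ^ 2 * s - x * s ^ 2 := by
    have hmm : 0 < E * (x ^ 2 + x * Real.exp x - x * E - 3 * Real.exp x - 3 * E + 6) :=
      mul_pos hEpos hG
    simp only [hsdef]
    nlinarith [hmm, hEe, h9]
  set t := x / s with htdef
  have hts : t * s = x := div_mul_cancel₀ x hs.ne'
  have ht1 : 1 < t := (lt_div_iff₀ hs).mpr (by linarith)
  have hid : s ^ 2 * ((t - 1) * (t + 3) - t * s * (t + 1))
      = x ^ 2 + 2 * x * s - 3 * s ^ 2 - x ^ 2 * s - x * s ^ 2 := by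
    rw [← hts]; ring
  have h4 : 0 < s ^ 2 * ((t - 1) * (t + 3) - t * s * (t + 1)) := by rw [hid]; exact hC
  have h5 : 0 < (t - 1) * (t + 3) - t * s * (t + 1) := by
    by_contra hcon
    push_neg at hcon
    nlinarith [h4, hcon, sq_nonneg s]
  have hts2 : t * s * (t + 1) = x * (t + 1) := by rw [hts]
  have h5' : x * (t + 1) < (t - 1) * (t + 3) := by nlinarith [h5, hts2]
  have h6 : x + 1 - t < 2 * (t - 1) / (t + 1) := by
    rw [lt_div_iff₀ (by linarith : (0:ℝ) < t + 1)]
    nlinarith [h5']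
  have h7 : x + 1 - t < Real.log t := lt_of_lt_of_le h6 (two_mul_div_le_log ht1.le)
  have hlst : Real.log (s / x) = -Real.log t := by
    rw [htdef, Real.log_div hs.ne' hx.ne', Real.log_div hx.ne' hs.ne']
    ring
  have hrhs : E * x / s - 1 = t - x - 1 := by
    have hE' : E = 1 - s := by rw [hsdef]; ring
    rw [hE', htdef]
    field_simp
  rw [hlst, hrhs]
  linarith

private lemma key_rho {ρ : ℝ} (h0 : 0 < ρ) (h1 : ρ < 1) :
    Real.log ((ρ - 1) / Real.log ρ) < ρ * Real.log ρ / (ρ - 1) - 1 := by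
  have hL : Real.log ρ < 0 := Real.log_neg h0 h1
  have hLne : Real.log ρ ≠ 0 := ne_of_lt hL
  have hρ1 : ρ - 1 ≠ 0 := by intro h; linarith [sub_eq_zero.mp h]
  set x := -Real.log ρ with hxdef
  have hx : 0 < x := by simp only [hxdef]; linarith
  have hxne : x ≠ 0 := hx.ne'
  have hexp : Real.exp (-x) = ρ := by
    rw [hxdef, neg_neg, Real.exp_log h0]
  have hk := key_x hx
  rw [hexp] at hk
  have e1 : (ρ - 1) / Real.log ρ = (1 - ρ) / x := by
    rw [hxdef]
    field_simp
    ring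
  have e2 : ρ * Real.log ρ / (ρ - 1) = ρ * x / (1 - ρ) := by
    rw [hxdef]
    have h1ρ : 1 - ρ ≠ 0 := by intro h; linarith [sub_eq_zero.mp h]
    field_simp
    ring
  rw [e1, e2]
  exact hk

private lemma hasDerivAt_w (R : ℝ) (hR : 0 ≤ R) {ρ : ℝ} (h0 : 0 < ρ) (h1 : ρ < 1) :
    HasDerivAt
      (fun ρ : ℝ => (1 / Real.log ρ) * Real.log ((ρ - 1) / ((R + 1) * Real.log ρ)))
      ((ρ * Real.log ρ / (ρ - 1) - 1 - Real.log ((ρ - 1) / ((R + 1) * Real.log ρ)))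
        / (ρ * (Real.log ρ) ^ 2)) ρ := by
  have hA : (0:ℝ) < R + 1 := by linarith
  have hL : Real.log ρ < 0 := Real.log_neg h0 h1
  have hLne : Real.log ρ ≠ 0 := ne_of_lt hL
  have hρne : ρ ≠ 0 := h0.ne'
  have hρ1 : ρ - 1 < 0 := by linarith
  have hd_ne : (R + 1) * Real.log ρ ≠ 0 := mul_ne_zero hA.ne' hLne
  have hq_pos : 0 < (ρ - 1) / ((R + 1) * Real.log ρ) :=
    div_pos_of_neg_of_neg hρ1 (mul_neg_of_pos_of_neg hA hL)
  have h_log := Real.hasDerivAt_log hρne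
  have h_inv := h_log.inv hLne
  have h_n : HasDerivAt (fun ρ : ℝ => ρ - 1) 1 ρ := (hasDerivAt_id' ρ).sub_const 1
  have h_d : HasDerivAt (fun ρ : ℝ => (R + 1) * Real.log ρ) ((R + 1) * ρ⁻¹) ρ :=
    h_log.const_mul (R + 1)
  have h_q := h_n.div h_d hd_ne
  have h_logq := h_q.log hq_pos.ne'
  have h_total := h_inv.mul h_logq
  have hfun : (fun ρ : ℝ => (1 / Real.log ρ) * Real.log ((ρ - 1) / ((R + 1) * Real.log ρ)))
      = fun ρ : ℝ => (Real.log ρ)⁻¹ * Real.log ((ρ - 1) / ((R + 1) * Real.log ρ)) := by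
    funext y
    rw [one_div]
  rw [hfun]
  have hρ1ne : ρ - 1 ≠ 0 := ne_of_lt hρ1
  refine h_total.congr_deriv ?_
  simp only [Pi.div_apply, Pi.inv_apply]
  set LQ := Real.log ((ρ - 1) / ((R + 1) * Real.log ρ)) with hLQ
  field_simp [hLne, hρne, hA.ne', hρ1ne]
  ring

/-- For fixed `R ≥ 0`, the function
`w(ρ) = (1/log ρ)·log((ρ-1)/((R+1)·log ρ))` is strictly increasing on `(0,1)`. -/
theorem stmt_9 (R : ℝ) (hR : 0 ≤ R) :
    StrictMonoOn
      (fun ρ : ℝ => (1 / Real.log ρ) * Real.log ((ρ - 1) / ((R + 1) * Real.log ρ)))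
      (Set.Ioo 0 1) := by
  apply strictMonoOn_of_deriv_pos (convex_Ioo 0 1)
  · intro ρ hρ
    exact ((hasDerivAt_w R hR hρ.1 hρ.2).differentiableAt.continuousAt).continuousWithinAt
  · intro ρ hρ
    rw [interior_Ioo] at hρ
    obtain ⟨h0, h1⟩ := hρ
    rw [(hasDerivAt_w R hR h0 h1).deriv]
    have hL : Real.log ρ < 0 := Real.log_neg h0 h1
    have hLne : Real.log ρ ≠ 0 := ne_of_lt hL
    have hA : (0:ℝ) < R + 1 := by linarith
    have hq : (ρ - 1) / ((R + 1) * Real.log ρ) = ((ρ - 1) / Real.log ρ) / (R + 1) := by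
      rw [div_div, mul_comm]
    have hsplit : Real.log ((ρ - 1) / ((R + 1) * Real.log ρ))
        = Real.log ((ρ - 1) / Real.log ρ) - Real.log (R + 1) := by
      rw [hq, Real.log_div _ hA.ne']
      exact (div_ne_zero (by intro h; linarith [sub_eq_zero.mp h] : ρ - 1 ≠ 0) hLne)
    have hlogA : 0 ≤ Real.log (R + 1) := Real.log_nonneg (by linarith)
    have hkey := key_rho h0 h1
    apply div_pos
    · rw [hsplit]; linarith
    · exact mul_pos h0 (lt_of_le_of_ne (sq_nonneg _) (Ne.symm (pow_ne_zero 2 hLne)))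
end
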